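/- Let γ : [0, L] → ℝ² be a C³ arc-length parametrized curve with γ(0) = 0, tangent τ₀ = γ'(0), curvature vector γ''(0) = κ₀ n₀. Let y₊ = γ(t₊) and y₋ = γ(t₋) with 0 < t₊ ≤ h, -h ≤ t₋ < 0. Define κ₀ʰ = 2(1/|y₊| + 1/|y₋|) · (y₋ · Q y₊)/(|y₊| + |y₋|)², where Q = [[0,1],[-1,0]]. Then |κ₀ʰ - κ₀| ≤ C h, where C depends only on bounds on |γ''| and |γ'''| and a lower bound c|t-s| ≤ |γ(t)-γ(s)| on the chord-arc constant. -/

import Mathlib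

open Real Set

noncomputable def nrm (z : ℝ × ℝ) : ℝ := Real.sqrt (z.1 ^ 2 + z.2 ^ 2)

def dot (a b : ℝ × ℝ) : ℝ := a.1 * b.1 + a.2 * b.2

/-- Rotation by 90 degrees: `Q = [[0,1],[-1,0]]` applied to a vector. -/
def Qrot (v : ℝ × ℝ) : ℝ × ℝ := (v.2, -v.1)

/-- The discrete curvature `κ₀ʰ` built from the two points `y₊, y₋`. -/
noncomputable def kappah (yp ym : ℝ × ℝ) : ℝ :=
  2 * (1 / nrm yp + 1 / nrm ym) * dot ym (Qrot yp) / (nrm yp + nrm ym) ^ 2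

def cross (a b : ℝ × ℝ) : ℝ := a.1 * b.2 - a.2 * b.1

lemma nrm_nonneg (z : ℝ × ℝ) : 0 ≤ nrm z := Real.sqrt_nonneg _

lemma nrm_sq (z : ℝ × ℝ) : nrm z ^ 2 = z.1 ^ 2 + z.2 ^ 2 :=
  Real.sq_sqrt (by positivity)

lemma nrm_smul (t : ℝ) (z : ℝ × ℝ) : nrm (t • z) = |t| * nrm z := by
  simp only [nrm, Prod.smul_fst, Prod.smul_snd, smul_eq_mul]
  rw [show (t*z.1)^2 + (t*z.2)^2 = t^2 * (z.1^2+z.2^2) by ring, Real.sqrt_mul (sq_nonneg t),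
    Real.sqrt_sq_eq_abs]

lemma dot_le_nrm (a b : ℝ × ℝ) : a.1*b.1 + a.2*b.2 ≤ nrm a * nrm b := by
  have ha := nrm_nonneg a; have hb := nrm_nonneg b
  have h2 := nrm_sq a; have h3 := nrm_sq b
  nlinarith [sq_nonneg (a.1*b.2 - a.2*b.1), sq_nonneg (nrm a * nrm b - (a.1*b.1+a.2*b.2)),
    mul_nonneg ha hb, sq_nonneg (nrm a * nrm b + (a.1*b.1+a.2*b.2))]

lemma abs_cross_le (a b : ℝ × ℝ) : |cross a b| ≤ nrm a * nrm b := by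
  have ha := nrm_nonneg a; have hb := nrm_nonneg b
  have h2 := nrm_sq a; have h3 := nrm_sq b
  rw [abs_le, cross]
  constructor <;> nlinarith [sq_nonneg (a.1*b.1 + a.2*b.2), mul_nonneg ha hb,
    sq_nonneg (nrm a * nrm b - (a.1 * b.2 - a.2 * b.1)),
    sq_nonneg (nrm a * nrm b + (a.1 * b.2 - a.2 * b.1))]

lemma nrm_add_le (a b : ℝ × ℝ) : nrm (a + b) ≤ nrm a + nrm b := by
  have h := dot_le_nrm a b
  have h2 := nrm_sq a; have h3 := nrm_sq b
  have ha := nrm_nonneg a; have hb := nrm_nonneg b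
  have key : ((a+b).1)^2 + ((a+b).2)^2 ≤ (nrm a + nrm b)^2 := by
    simp only [Prod.fst_add, Prod.snd_add]
    nlinarith
  calc nrm (a+b) ≤ Real.sqrt ((nrm a + nrm b)^2) := Real.sqrt_le_sqrt key
    _ = nrm a + nrm b := Real.sqrt_sq (by linarith)

lemma nrm_le_norm2 (z : ℝ × ℝ) : nrm z ≤ 2 * ‖z‖ := by
  have h1 : |z.1| ≤ ‖z‖ := by rw [Prod.norm_def]; exact le_max_of_le_left (le_refl ‖z.1‖)
  have h2 : |z.2| ≤ ‖z‖ := by rw [Prod.norm_def]; exact le_max_of_le_right (le_refl ‖z.2‖)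
  have key : z.1^2 + z.2^2 ≤ (|z.1| + |z.2|)^2 := by
    nlinarith [abs_nonneg z.1, abs_nonneg z.2, sq_abs z.1, sq_abs z.2,
      mul_nonneg (abs_nonneg z.1) (abs_nonneg z.2)]
  have : nrm z ≤ |z.1| + |z.2| := by
    calc nrm z ≤ Real.sqrt ((|z.1| + |z.2|)^2) := Real.sqrt_le_sqrt key
      _ = |z.1| + |z.2| := Real.sqrt_sq (by positivity)
  linarith

lemma norm_le_nrm (z : ℝ × ℝ) : ‖z‖ ≤ nrm z := by
  have h1 : |z.1| ≤ nrm z := by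
    rw [nrm, ← Real.sqrt_sq_eq_abs]
    exact Real.sqrt_le_sqrt (by nlinarith [sq_nonneg z.2])
  have h2 : |z.2| ≤ nrm z := by
    rw [nrm, ← Real.sqrt_sq_eq_abs]
    exact Real.sqrt_le_sqrt (by nlinarith [sq_nonneg z.1])
  rw [Prod.norm_def]
  exact max_le h1 h2

lemma nrm_sub_nrm_le (a b : ℝ × ℝ) : |nrm a - nrm b| ≤ nrm (a - b) := by
  rw [abs_le]
  refine ⟨?_, ?_⟩
  · have h := nrm_add_le a (b - a)
    have e : a + (b - a) = b := by abel
    rw [e] at h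
    have e2 : nrm (b - a) = nrm (a - b) := by
      have e3 : b - a = (-1 : ℝ) • (a - b) := by module
      rw [e3, nrm_smul]; norm_num
    linarith
  · have h := nrm_add_le b (a - b)
    have e : b + (a - b) = a := by abel
    rw [e] at h
    linarith

theorem discrete_curvature_error (M₂ M₃ c L₀ : ℝ)
    (hM₂ : 0 < M₂) (hM₃ : 0 < M₃) (hc : 0 < c) (hL₀ : 0 < L₀) :
    ∃ C > 0, ∃ h₀ > 0, ∀ γ : ℝ → ℝ × ℝ,
      ContDiff ℝ 3 γ → γ 0 = 0 →
      (∀ s, nrm (deriv γ s) = 1) →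
      (∀ s, nrm (iteratedDeriv 2 γ s) ≤ M₂) →
      (∀ s, nrm (iteratedDeriv 3 γ s) ≤ M₃) →
      (∀ s t : ℝ, |t - s| ≤ L₀ → c * |t - s| ≤ nrm (γ t - γ s)) →
      ∀ h tp tm : ℝ, 0 < h → h < h₀ → 0 < tp → tp ≤ h → -h ≤ tm → tm < 0 →
        |kappah (γ tp) (γ tm) - dot (iteratedDeriv 2 γ 0) (Qrot (deriv γ 0))| ≤ C * h := by
  set K : ℝ := 2*M₃ + 2*M₂*M₃ + 4*M₃^2 with hK
  set C : ℝ := 56*M₂*(M₂/2 + 2*M₃) + 16*K + 1 with hC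
  have hCpos : 0 < C := by rw [hC, hK]; positivity
  clear_value C K
  set h₀ : ℝ := min 1 (1/(M₂ + 4*M₃)) with hh₀
  have hh₀pos : 0 < h₀ := lt_min one_pos (by positivity)
  refine ⟨C, hCpos, h₀, hh₀pos, ?_⟩
  intro γ hγ hγ0 hunit hb2 hb3 _hchord h tp tm hh hhh₀ htp htph htmh htm
  -- basic smoothness facts
  have e2 : iteratedDeriv 2 γ = deriv (deriv γ) := by
    rw [show (2:ℕ) = 1+1 from rfl, iteratedDeriv_succ, iteratedDeriv_one]
  have e3 : iteratedDeriv 3 γ = deriv (deriv (deriv γ)) := by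
    rw [show (3:ℕ) = 2+1 from rfl, iteratedDeriv_succ,
      show (2:ℕ) = 1+1 from rfl, iteratedDeriv_succ, iteratedDeriv_one]
  have h3' : ContDiff ℝ ((2:ℕ)+1) γ := by exact_mod_cast hγ
  have A1 := contDiff_succ_iff_deriv.mp h3'
  have hd1 : Differentiable ℝ γ := A1.1
  have h2' : ContDiff ℝ ((1:ℕ)+1) (deriv γ) := by exact_mod_cast A1.2.2
  have A2 := contDiff_succ_iff_deriv.mp h2'
  have hd2 : Differentiable ℝ (deriv γ) := A2.1
  have hd3 : Differentiable ℝ (deriv (deriv γ)) := A2.2.2.differentiable (by simp)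
  set τ : ℝ × ℝ := deriv γ 0 with hτdef
  clear_value τ
  set w : ℝ × ℝ := deriv (deriv γ) 0 with hwdef
  clear_value w
  have hτ1 : nrm τ = 1 := by rw [hτdef]; exact hunit 0
  have hwM : nrm w ≤ M₂ := by rw [hwdef, ← e2]; exact hb2 0
  have hbound3 : ∀ x : ℝ, ‖deriv (deriv (deriv γ)) x‖ ≤ M₃ := fun x => by
    refine (norm_le_nrm _).trans ?_; rw [← e3]; exact hb3 x
  have hh1 : h ≤ 1 := le_of_lt (lt_of_lt_of_le hhh₀ (min_le_left _ _))
  have hhM : h * (M₂ + 4*M₃) < 1 := by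
    have : h < 1/(M₂ + 4*M₃) := lt_of_lt_of_le hhh₀ (min_le_right _ _)
    have hpos : (0:ℝ) < M₂ + 4*M₃ := by positivity
    calc h * (M₂ + 4*M₃) < (1/(M₂ + 4*M₃)) * (M₂ + 4*M₃) := by
          exact mul_lt_mul_of_pos_right this hpos
      _ = 1 := by field_simp
  set δ : ℝ := (M₂/2 + 2*M₃) * h with hδdef
  clear_value δ
  have hδpos : 0 < δ := by rw [hδdef]; positivity
  have hδhalf : δ ≤ 1/2 := by
    have : δ = h * (M₂ + 4*M₃) / 2 := by rw [hδdef]; ring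
    rw [this]; linarith
  -- Step A: second derivative variation
  have claimA : ∀ t : ℝ, |t| ≤ h → ‖deriv (deriv γ) t - w‖ ≤ M₃ * h := by
    intro t ht
    have hmem : t ∈ Icc (-h) h := abs_le.mp ht
    have h0mem : (0:ℝ) ∈ Icc (-h) h := ⟨by linarith, by linarith⟩
    have key := (convex_Icc (-h) h).norm_image_sub_le_of_norm_hasDerivWithin_le
      (f := deriv (deriv γ)) (f' := deriv (deriv (deriv γ)))
      (fun x _ => (hd3 x).hasDerivAt.hasDerivWithinAt)
      (fun x _ => hbound3 x) h0mem hmem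
    have hn : ‖t - 0‖ ≤ h := by simpa [Real.norm_eq_abs] using ht
    rw [hwdef]
    calc ‖deriv (deriv γ) t - deriv (deriv γ) 0‖ ≤ M₃ * ‖t - 0‖ := key
      _ ≤ M₃ * h := mul_le_mul_of_nonneg_left hn hM₃.le
  -- Step B: first derivative expansion
  have claimB : ∀ t : ℝ, |t| ≤ h → ‖deriv γ t - τ - t • w‖ ≤ (M₃ * h) * |t| := by
    intro t ht
    have hmem : t ∈ Icc (-h) h := abs_le.mp ht
    have h0mem : (0:ℝ) ∈ Icc (-h) h := ⟨by linarith, by linarith⟩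
    have hder : ∀ x ∈ Icc (-h) h, HasDerivWithinAt (fun u : ℝ => deriv γ u - u • w)
        (deriv (deriv γ) x - w) (Icc (-h) h) x := by
      intro x _
      have h1 : HasDerivAt (deriv γ) (deriv (deriv γ) x) x := (hd2 x).hasDerivAt
      have h2 : HasDerivAt (fun u : ℝ => u • w) w x := by
        simpa using (hasDerivAt_id x).smul_const w
      exact (h1.sub h2).hasDerivWithinAt
    have key := (convex_Icc (-h) h).norm_image_sub_le_of_norm_hasDerivWithin_le hder
      (fun x hx => claimA x (abs_le.mpr hx)) h0mem hmem
    simp only [zero_smul, sub_zero, Real.norm_eq_abs] at key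
    have e : deriv γ t - t • w - deriv γ 0 = deriv γ t - τ - t • w := by
      rw [hτdef]; abel
    rwa [e] at key
  -- Step C: Taylor expansion of γ
  have claimC : ∀ t : ℝ, |t| ≤ h → ‖γ t - t • τ - (t^2/2) • w‖ ≤ (M₃ * h) * t^2 := by
    intro t ht
    have hmem : t ∈ uIcc 0 t := right_mem_uIcc
    have h0mem : (0:ℝ) ∈ uIcc 0 t := left_mem_uIcc
    have habs : ∀ x ∈ uIcc (0:ℝ) t, |x| ≤ |t| := by
      intro x hx
      rcases mem_uIcc.mp hx with ⟨h1, h2⟩ | ⟨h1, h2⟩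
      · rw [abs_of_nonneg h1]; exact le_trans h2 (le_abs_self t)
      · rw [abs_of_nonpos h2]; have := neg_abs_le t; linarith
    have hder : ∀ x ∈ uIcc (0:ℝ) t, HasDerivWithinAt (fun u : ℝ => γ u - u • τ - (u^2/2) • w)
        (deriv γ x - τ - x • w) (uIcc 0 t) x := by
      intro x _
      have h1 : HasDerivAt γ (deriv γ x) x := (hd1 x).hasDerivAt
      have h2 : HasDerivAt (fun u : ℝ => u • τ) τ x := by
        simpa using (hasDerivAt_id x).smul_const τ
      have h3 : HasDerivAt (fun u : ℝ => (u^2/2) • w) (x • w) x := by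
        have hp : HasDerivAt (fun u : ℝ => u^2/2) x x := by
          simpa using (hasDerivAt_pow 2 x).div_const 2
        simpa using hp.smul_const w
      exact ((h1.sub h2).sub h3).hasDerivWithinAt
    have hbnd : ∀ x ∈ uIcc (0:ℝ) t, ‖deriv γ x - τ - x • w‖ ≤ (M₃ * h) * |t| := by
      intro x hx
      have hx1 : |x| ≤ |t| := habs x hx
      have hx2 : |x| ≤ h := le_trans hx1 ht
      calc ‖deriv γ x - τ - x • w‖ ≤ (M₃ * h) * |x| := claimB x hx2
        _ ≤ (M₃ * h) * |t| := mul_le_mul_of_nonneg_left hx1 (by positivity)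
    have key := (convex_uIcc 0 t).norm_image_sub_le_of_norm_hasDerivWithin_le hder hbnd h0mem hmem
    have e0 : γ 0 - (0:ℝ) • τ - ((0:ℝ)^2/2) • w = 0 := by simp [hγ0]
    rw [e0, sub_zero] at key
    have : ‖t - 0‖ = |t| := by simp [Real.norm_eq_abs]
    rw [this] at key
    calc ‖γ t - t • τ - (t^2/2) • w‖ ≤ (M₃*h)*|t| * |t| := key
      _ = (M₃*h) * t^2 := by rw [mul_assoc, abs_mul_abs_self, sq]
  -- remainders
  have htpa : |tp| ≤ h := by rw [abs_of_pos htp]; exact htph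
  have htma : |tm| ≤ h := by rw [abs_of_neg htm]; linarith
  set s : ℝ := -tm with hsdef
  clear_value s
  have hs : 0 < s := by rw [hsdef]; linarith
  have hsh : s ≤ h := by rw [hsdef]; linarith
  set yp : ℝ × ℝ := γ tp with hypdef
  clear_value yp
  set ym : ℝ × ℝ := γ tm with hymdef
  clear_value ym
  set Rp : ℝ × ℝ := yp - tp • τ - (tp^2/2) • w with hRpdef
  clear_value Rp
  set Rm : ℝ × ℝ := ym - tm • τ - (tm^2/2) • w with hRmdef
  clear_value Rm
  have hRp : nrm Rp ≤ 2*M₃*h*tp^2 := by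
    have := claimC tp htpa
    calc nrm Rp ≤ 2 * ‖Rp‖ := nrm_le_norm2 Rp
      _ ≤ 2*M₃*h*tp^2 := by rw [hRpdef, hypdef]; linarith only [this]
  have hRm : nrm Rm ≤ 2*M₃*h*s^2 := by
    have h1 := claimC tm htma
    have e : tm^2 = s^2 := by rw [hsdef]; ring
    calc nrm Rm ≤ 2 * ‖Rm‖ := nrm_le_norm2 Rm
      _ ≤ 2*M₃*h*s^2 := by rw [hRmdef, hymdef, ← e]; linarith only [h1]
  set ap : ℝ := nrm yp with hapdef
  clear_value ap
  set am : ℝ := nrm ym with hamdef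
  clear_value am
  -- length comparison
  have hap : |ap - tp| ≤ δ * tp := by
    have e1 : nrm (tp • τ) = tp := by rw [nrm_smul, hτ1, abs_of_pos htp]; ring
    have tri := nrm_sub_nrm_le yp (tp • τ)
    rw [e1, ← hapdef] at tri
    have e2 : yp - tp • τ = (tp^2/2) • w + Rp := by rw [hRpdef]; abel
    have b1 : nrm (yp - tp • τ) ≤ (tp^2/2) * M₂ + 2*M₃*h*tp^2 := by
      rw [e2]
      refine (nrm_add_le _ _).trans ?_
      have hn : nrm ((tp^2/2) • w) ≤ (tp^2/2) * M₂ := by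
        rw [nrm_smul, abs_of_nonneg (by positivity)]
        exact mul_le_mul_of_nonneg_left hwM (by positivity)
      linarith only [hn, hRp]
    have b2 : (tp^2/2) * M₂ + 2*M₃*h*tp^2 ≤ δ * tp := by
      rw [hδdef]
      have t1 : tp*tp ≤ h*tp := mul_le_mul_of_nonneg_right htph htp.le
      have t2 : tp ≤ 1 := htph.trans hh1
      have u1 : M₂*(tp*tp) ≤ M₂*(h*tp) := mul_le_mul_of_nonneg_left t1 hM₂.le
      have u2 : tp*tp ≤ 1*tp := mul_le_mul_of_nonneg_right t2 htp.le
      have u3 : (2*M₃*h)*(tp*tp) ≤ (2*M₃*h)*tp :=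
        mul_le_mul_of_nonneg_left (by linarith only [u2]) (by positivity)
      linarith only [u1, u3]
    exact tri.trans (b1.trans b2)
  have ham : |am - s| ≤ δ * s := by
    have e1 : nrm (tm • τ) = s := by rw [nrm_smul, hτ1, abs_of_neg htm, hsdef]; ring
    have tri := nrm_sub_nrm_le ym (tm • τ)
    rw [e1, ← hamdef] at tri
    have e2 : ym - tm • τ = (tm^2/2) • w + Rm := by rw [hRmdef]; abel
    have b1 : nrm (ym - tm • τ) ≤ (s^2/2) * M₂ + 2*M₃*h*s^2 := by
      rw [e2]
      refine (nrm_add_le _ _).trans ?_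
      have hts : tm^2 = s^2 := by rw [hsdef]; ring
      have hn : nrm ((tm^2/2) • w) ≤ (s^2/2) * M₂ := by
        rw [nrm_smul, hts, abs_of_nonneg (by positivity)]
        exact mul_le_mul_of_nonneg_left hwM (by positivity)
      linarith only [hn, hRm]
    have b2 : (s^2/2) * M₂ + 2*M₃*h*s^2 ≤ δ * s := by
      rw [hδdef]
      have t1 : s*s ≤ h*s := mul_le_mul_of_nonneg_right hsh hs.le
      have t2 : s ≤ 1 := hsh.trans hh1
      have u1 : M₂*(s*s) ≤ M₂*(h*s) := mul_le_mul_of_nonneg_left t1 hM₂.le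
      have u2 : s*s ≤ 1*s := mul_le_mul_of_nonneg_right t2 hs.le
      have u3 : (2*M₃*h)*(s*s) ≤ (2*M₃*h)*s :=
        mul_le_mul_of_nonneg_left (by linarith only [u2]) (by positivity)
      linarith only [u1, u3]
    exact tri.trans (b1.trans b2)
  have hapl : (1-δ)*tp ≤ ap := by
    have h1 := (abs_le.mp hap).1
    have e : (1-δ)*tp = tp - δ*tp := by ring
    linarith only [h1, e.le, e.ge]
  have hapu : ap ≤ (1+δ)*tp := by
    have h1 := (abs_le.mp hap).2
    have e : (1+δ)*tp = tp + δ*tp := by ring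
    linarith only [h1, e.le, e.ge]
  have haml : (1-δ)*s ≤ am := by
    have h1 := (abs_le.mp ham).1
    have e : (1-δ)*s = s - δ*s := by ring
    linarith only [h1, e.le, e.ge]
  have hamu : am ≤ (1+δ)*s := by
    have h1 := (abs_le.mp ham).2
    have e : (1+δ)*s = s + δ*s := by ring
    linarith only [h1, e.le, e.ge]
  have hap0 : 0 < ap :=
    lt_of_lt_of_le (mul_pos (by linarith only [hδhalf] : (0:ℝ) < 1-δ) htp) hapl
  have ham0 : 0 < am :=
    lt_of_lt_of_le (mul_pos (by linarith only [hδhalf] : (0:ℝ) < 1-δ) hs) haml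
  -- numerator expansion
  set κ : ℝ := cross w τ with hκdef
  clear_value κ
  have hκM : |κ| ≤ M₂ := by
    have := abs_cross_le w τ
    rw [hτ1, ← hκdef] at this
    calc |κ| ≤ nrm w * 1 := this
      _ ≤ M₂ := by linarith only [this, hwM]
  set err : ℝ := tm * cross τ Rp - tp * cross τ Rm + (tm^2/2) * cross w Rp
      - (tp^2/2) * cross w Rm + cross Rm Rp with herrdef
  clear_value err
  set N : ℝ := cross ym yp with hNdef
  clear_value N
  have key : N = κ * (tm^2*tp - tm*tp^2)/2 + err := by
    rw [hNdef, herrdef, hκdef]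
    simp only [hRpdef, hRmdef, cross, Prod.fst_sub, Prod.snd_sub, Prod.smul_fst,
      Prod.smul_snd, smul_eq_mul]
    ring
  set P : ℝ := s * tp * (s + tp) with hPdef
  clear_value P
  have hPpos : 0 < P := by rw [hPdef]; positivity
  have hPe : tm^2*tp - tm*tp^2 = P := by rw [hPdef, hsdef]; ring
  -- error bound
  have hcτRp : |cross τ Rp| ≤ 2*M₃*h*tp^2 := by
    have h1 := abs_cross_le τ Rp
    rw [hτ1, one_mul] at h1
    exact h1.trans hRp
  have hcτRm : |cross τ Rm| ≤ 2*M₃*h*s^2 := by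
    have h1 := abs_cross_le τ Rm
    rw [hτ1, one_mul] at h1
    exact h1.trans hRm
  have hcwRp : |cross w Rp| ≤ M₂ * (2*M₃*h*tp^2) := by
    have h1 := abs_cross_le w Rp
    exact h1.trans (mul_le_mul hwM hRp (nrm_nonneg _) hM₂.le)
  have hcwRm : |cross w Rm| ≤ M₂ * (2*M₃*h*s^2) := by
    have h1 := abs_cross_le w Rm
    exact h1.trans (mul_le_mul hwM hRm (nrm_nonneg _) hM₂.le)
  have hcRR : |cross Rm Rp| ≤ (2*M₃*h*s^2) * (2*M₃*h*tp^2) := by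
    have h1 := abs_cross_le Rm Rp
    exact h1.trans (mul_le_mul hRm hRp (nrm_nonneg _) (by positivity))
  have herr : |err| ≤ K * h * P := by
    have b1 : |tm * cross τ Rp| ≤ s * (2*M₃*h*tp^2) := by
      rw [abs_mul, abs_of_neg htm, ← hsdef]
      exact mul_le_mul_of_nonneg_left hcτRp hs.le
    have b2 : |tp * cross τ Rm| ≤ tp * (2*M₃*h*s^2) := by
      rw [abs_mul, abs_of_pos htp]
      exact mul_le_mul_of_nonneg_left hcτRm htp.le
    have b3 : |(tm^2/2) * cross w Rp| ≤ (s^2/2) * (M₂ * (2*M₃*h*tp^2)) := by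
      rw [abs_mul]
      have e : |tm^2/2| = s^2/2 := by
        rw [abs_of_nonneg (by positivity), hsdef]; ring
      rw [e]
      exact mul_le_mul_of_nonneg_left hcwRp (by positivity)
    have b4 : |(tp^2/2) * cross w Rm| ≤ (tp^2/2) * (M₂ * (2*M₃*h*s^2)) := by
      rw [abs_mul, abs_of_nonneg (by positivity)]
      exact mul_le_mul_of_nonneg_left hcwRm (by positivity)
    have tri : |err| ≤ |tm * cross τ Rp| + |tp * cross τ Rm| + |(tm^2/2) * cross w Rp|
        + |(tp^2/2) * cross w Rm| + |cross Rm Rp| := by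
      rw [herrdef]
      have t0 := abs_add_le (tm * cross τ Rp - tp * cross τ Rm + (tm^2/2) * cross w Rp
          - (tp^2/2) * cross w Rm) (cross Rm Rp)
      have t1 := abs_sub (tm * cross τ Rp - tp * cross τ Rm + (tm^2/2) * cross w Rp)
        ((tp^2/2) * cross w Rm)
      have t2 := abs_add_le (tm * cross τ Rp - tp * cross τ Rm) ((tm^2/2) * cross w Rp)
      have t3 := abs_sub (tm * cross τ Rp) (tp * cross τ Rm)
      linarith only [t0, t1, t2, t3]
    have hstp : s^2*tp^2 ≤ h*(s*tp*(s+tp)) := by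
      have u1 : (s*tp)*(s*tp) ≤ (h*tp)*(s*tp) :=
        mul_le_mul_of_nonneg_right (mul_le_mul_of_nonneg_right hsh htp.le)
          (mul_pos hs htp).le
      have u2 : (0:ℝ) ≤ h*(s*s)*tp := by positivity
      nlinarith only [u1, u2]
    have assemble : s * (2*M₃*h*tp^2) + tp * (2*M₃*h*s^2) + (s^2/2) * (M₂ * (2*M₃*h*tp^2))
        + (tp^2/2) * (M₂ * (2*M₃*h*s^2)) + (2*M₃*h*s^2) * (2*M₃*h*tp^2)
        ≤ K * h * (s*tp*(s+tp)) := by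
      have c1 : (2*M₂*M₃*h + 4*M₃^2*h^2) * (s^2*tp^2)
          ≤ (2*M₂*M₃*h + 4*M₃^2*h^2) * (h*(s*tp*(s+tp))) :=
        mul_le_mul_of_nonneg_left hstp (by positivity)
      have c2 : (2*M₂*M₃*h + 4*M₃^2*h^2) * h ≤ (2*M₂*M₃ + 4*M₃^2) * h := by
        have d1 : M₂*M₃*h ≤ M₂*M₃ := mul_le_of_le_one_right (mul_pos hM₂ hM₃).le hh1
        have d2 : M₃^2*h^2 ≤ M₃^2 :=
          mul_le_of_le_one_right (sq_nonneg M₃) (by nlinarith only [hh, hh1])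
        have : 2*M₂*M₃*h + 4*M₃^2*h^2 ≤ 2*M₂*M₃ + 4*M₃^2 := by
          linarith only [d1, d2]
        exact mul_le_mul_of_nonneg_right this hh.le
      have c3 : ((2*M₂*M₃*h + 4*M₃^2*h^2) * h) * (s*tp*(s+tp))
          ≤ ((2*M₂*M₃ + 4*M₃^2) * h) * (s*tp*(s+tp)) :=
        mul_le_mul_of_nonneg_right c2 (by positivity)
      rw [hK]
      nlinarith only [c1, c3]
    rw [hPdef]
    have final := tri.trans (by linarith only [b1, b2, b3, b4, hcRR, assemble] :
      |tm * cross τ Rp| + |tp * cross τ Rm| + |(tm^2/2) * cross w Rp|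
        + |(tp^2/2) * cross w Rm| + |cross Rm Rp| ≤ K * h * (s*tp*(s+tp)))
    exact final
  -- denominator comparison
  have hδ0 : (0:ℝ) ≤ 1 - δ := by linarith only [hδhalf]
  have hhalfp : tp/2 ≤ ap := by
    have u := mul_le_mul_of_nonneg_right hδhalf htp.le
    linarith only [hapl, u]
  have hhalfm : s/2 ≤ am := by
    have u := mul_le_mul_of_nonneg_right hδhalf hs.le
    linarith only [haml, u]
  set D : ℝ := ap * am * (ap + am) with hDdef
  clear_value D
  have hDl : P/8 ≤ D := by
    have hA : (tp/2)*(s/2) ≤ ap*am :=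
      mul_le_mul hhalfp hhalfm (by positivity) hap0.le
    have hB : (tp+s)/2 ≤ ap+am := by linarith only [hhalfp, hhalfm]
    have full : ((tp/2)*(s/2))*((tp+s)/2) ≤ (ap*am)*(ap+am) :=
      mul_le_mul hA hB (by positivity) (mul_nonneg hap0.le ham0.le)
    rw [hPdef, hDdef]
    linarith only [full]
  have hD0 : 0 < D := by
    rw [hDdef]
    exact mul_pos (mul_pos hap0 ham0) (by positivity)
  have hDu : |D - P| ≤ 7 * δ * P := by
    have hAu : ap*am ≤ ((1+δ)*tp)*((1+δ)*s) :=
      mul_le_mul hapu hamu ham0.le (by positivity)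
    have hBu : ap+am ≤ (1+δ)*(tp+s) := by linarith only [hapu, hamu]
    have fullu : (ap*am)*(ap+am) ≤ (((1+δ)*tp)*((1+δ)*s))*((1+δ)*(tp+s)) :=
      mul_le_mul hAu hBu (by positivity) (by positivity)
    have hAl : ((1-δ)*tp)*((1-δ)*s) ≤ ap*am :=
      mul_le_mul hapl haml (by positivity) hap0.le
    have hBl : (1-δ)*(tp+s) ≤ ap+am := by linarith only [hapl, haml]
    have fulll : (((1-δ)*tp)*((1-δ)*s))*((1-δ)*(tp+s)) ≤ (ap*am)*(ap+am) :=
      mul_le_mul hAl hBl (by positivity) (mul_nonneg hap0.le ham0.le)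
    have coefu : (3*δ^2 + δ^3) * (s*tp*(s+tp)) ≤ 4*δ * (s*tp*(s+tp)) := by
      have : 3*δ^2 + δ^3 ≤ 4*δ := by nlinarith only [hδpos, hδhalf]
      exact mul_le_mul_of_nonneg_right this (by positivity)
    have coefl : (0:ℝ) ≤ (3*δ^2 + 4*δ - δ^3) * (s*tp*(s+tp)) := by
      have : (0:ℝ) ≤ 3*δ^2 + 4*δ - δ^3 := by nlinarith only [hδpos, hδhalf]
      positivity
    rw [abs_le, hDdef, hPdef]
    constructor
    · nlinarith only [fulll, coefl]
    · nlinarith only [fullu, coefu]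
  -- kappah formula
  have hkap : kappah yp ym = 2 * N / D := by
    have hapne : ap ≠ 0 := ne_of_gt hap0
    have hamne : am ≠ 0 := ne_of_gt ham0
    have hsumne : ap + am ≠ 0 := by positivity
    have hNe : dot ym (Qrot yp) = N := by
      rw [hNdef]; simp only [dot, Qrot, cross]; ring
    rw [kappah, hNe, ← hapdef, ← hamdef, hDdef]
    field_simp
    ring
  -- final estimate
  have hN2 : 2 * N = κ * P + 2 * err := by rw [key, hPe]; ring
  have hgoal : |kappah yp ym - κ| ≤ C * h := by
    rw [hkap]
    have e : 2 * N / D - κ = (κ * (P - D) + 2 * err) / D := by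
      field_simp
      linarith only [hN2]
    rw [e, abs_div, abs_of_pos hD0]
    have t1 : |κ * (P - D)| ≤ M₂ * (7*δ*P) := by
      rw [abs_mul, abs_sub_comm P D]
      exact mul_le_mul hκM hDu (abs_nonneg _) hM₂.le
    have hnum : |κ * (P - D) + 2 * err| ≤ M₂ * (7*δ*P) + 2*(K*h*P) := by
      have t2 := abs_add_le (κ * (P - D)) (2 * err)
      have t3 : |2 * err| = 2 * |err| := by rw [abs_mul]; norm_num
      linarith only [t1, t2, t3.le, t3.ge, herr]
    have step1 : |κ * (P - D) + 2 * err| / D ≤ |κ * (P - D) + 2 * err| / (P/8) :=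
      div_le_div_of_nonneg_left (abs_nonneg _) (by positivity) hDl
    have step2 : |κ * (P - D) + 2 * err| / (P/8) ≤ (M₂ * (7*δ*P) + 2*(K*h*P)) / (P/8) :=
      (div_le_div_iff_of_pos_right (by positivity)).mpr hnum
    have step3 : (M₂ * (7*δ*P) + 2*(K*h*P)) / (P/8) = 56*M₂*δ + 16*K*h := by
      field_simp
      ring
    have step4 : 56*M₂*δ + 16*K*h ≤ C * h := by
      rw [hδdef, hC]
      have : (0:ℝ) ≤ h := hh.le
      nlinarith only [this]
    calc |κ * (P - D) + 2 * err| / D ≤ |κ * (P - D) + 2 * err| / (P/8) := step1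
      _ ≤ (M₂ * (7*δ*P) + 2*(K*h*P)) / (P/8) := step2
      _ = 56*M₂*δ + 16*K*h := step3
      _ ≤ C * h := step4
  have efin : dot (iteratedDeriv 2 γ 0) (Qrot τ) = κ := by
    rw [e2, hκdef, ← hwdef]
    simp only [dot, Qrot, cross]; ring
  rw [efin]
  exact hgoal
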